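/- Let (Bᵗ)_{t=1}^n be a family of real n×n matrices with entries Bᵢⱼᵗ that are symmetric under all 6 permutations of the three indices (i, j, t), and suppose Σₜ Bᵢⱼᵗ B_{ct}^d = Σₜ B_{ci}^t B_{dt}^j for all i, j, c, d (the cyclic symmetry condition with C ≡ 0). Then the matrices Bᵗ mutually commute: Bʲ Bᶜ = Bᶜ Bʲ for all j, c. -/
import Mathlib


/-- Let `B^t` (t = 1,…,n) be real `n×n` matrices whose entries `B t i j = Bᵢⱼᵗ`
are symmetric under all permutations of the three indices `(i, j, t)`, and suppose
`Σₜ Bᵢⱼᵗ B_{ct}^d = Σₜ B_{ci}^t B_{dt}^j` for all `i, j, c, d`.  Then the matrices `B^t`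
mutually commute. -/
theorem recursion_matrices_commute (n : ℕ) (B : Fin n → Matrix (Fin n) (Fin n) ℝ)
    (hsymm1 : ∀ t i j, B t i j = B t j i)
    (hsymm2 : ∀ t i j, B t i j = B i t j)
    (hcyc : ∀ i j c d : Fin n, (∑ t, B t i j * B d c t) = ∑ t, B t c i * B j d t) :
    ∀ j c : Fin n, B j * B c = B c * B j := by
  intro j c
  ext a b
  simp only [Matrix.mul_apply]
  calc ∑ t, B j a t * B c t b
      = ∑ t, B t a j * B b c t := by
        refine Finset.sum_congr rfl fun t _ => ?_
        rw [hsymm2 j a t, hsymm1 a j t, hsymm2 a t j, hsymm1 c t b, hsymm2 c b t]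
    _ = ∑ t, B t c a * B j b t := hcyc a j c b
    _ = ∑ t, B c a t * B j t b := by
        refine Finset.sum_congr rfl fun t _ => ?_
        rw [hsymm2 t c a, hsymm1 c t a, hsymm1 j b t]
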